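/- Let q*(σ²) solve q = E[tanh²(λ(q) + √λ(q) Z)] with λ(q) = (σ² + α(1−q))⁻¹, and suppose q*(σ²) is differentiable in σ². Then d/dσ² [h_RS(q*(σ²); σ², α)] = (1/(2σ²)) · (1 − q*)/(σ² + α(1 − q*)), where h_RS is as in Tanaka's formula. -/

import Mathlib

open MeasureTheory ProbabilityTheory Real Filter
open scoped ENNReal NNReal

noncomputable def stdGaussian : Measure ℝ := gaussianReal 0 1

/-- `λ(q) = (σ² + α(1−q))⁻¹` with `s = σ²`. -/
noncomputable def lamOf (s α q : ℝ) : ℝ := (s + α * (1 - q))⁻¹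

/-- Tanaka's replica free-entropy functional. -/
noncomputable def hRS (s α q : ℝ) : ℝ :=
  (∫ z, Real.log (2 * Real.cosh (lamOf s α q + Real.sqrt (lamOf s α q) * z)) ∂stdGaussian)
    - (1 / 2) * lamOf s α q * (1 + q) - (1 / (2 * α)) * Real.log (1 + α / s * (1 - q))

instance : IsProbabilityMeasure stdGaussian := by
  unfold _root_.stdGaussian; infer_instance

lemma gpdf_eq (x : ℝ) :
    gaussianPDFReal 0 1 x = (Real.sqrt (2 * π))⁻¹ * rexp (-(x ^ 2 / 2)) := by
  rw [gaussianPDFReal]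
  norm_num [neg_div]

lemma stdGaussian_eq_withDensity :
    _root_.stdGaussian = volume.withDensity (fun x => ((gaussianPDFReal 0 1 x).toNNReal : ℝ≥0∞)) := by
  rw [_root_.stdGaussian, gaussianReal_of_var_ne_zero 0 one_ne_zero]
  rfl

lemma integral_stdGaussian (g : ℝ → ℝ) :
    ∫ z, g z ∂stdGaussian = ∫ z, gaussianPDFReal 0 1 z * g z := by
  rw [stdGaussian_eq_withDensity,
    integral_withDensity_eq_integral_smul (measurable_gaussianPDFReal 0 1).real_toNNReal]
  congr 1; ext z
  simp [NNReal.smul_def, Real.coe_toNNReal _ (gaussianPDFReal_nonneg 0 1 z)]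

lemma integrable_stdGaussian_iff (g : ℝ → ℝ) :
    Integrable g stdGaussian ↔ Integrable (fun z => gaussianPDFReal 0 1 z * g z) := by
  rw [stdGaussian_eq_withDensity,
    integrable_withDensity_iff_integrable_smul (measurable_gaussianPDFReal 0 1).real_toNNReal]
  constructor <;> intro h <;> refine h.congr (ae_of_all _ fun z => ?_) <;>
    simp [NNReal.smul_def, Real.coe_toNNReal _ (gaussianPDFReal_nonneg 0 1 z)]

lemma integrable_of_bounded {g : ℝ → ℝ} {C : ℝ}
    (hmeas : AEStronglyMeasurable g stdGaussian)
    (h : ∀ z, |g z| ≤ C) : Integrable g stdGaussian :=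
  Integrable.mono' (integrable_const C) hmeas (ae_of_all _ fun z => by simpa using h z)

lemma integrable_abs_stdGaussian : Integrable (fun z => |z|) stdGaussian := by
  rw [integrable_stdGaussian_iff]
  have h : Integrable (fun x : ℝ => (Real.sqrt (2 * π))⁻¹ * |x * rexp (-(1/2 : ℝ) * x ^ 2)|) :=
    (integrable_mul_exp_neg_mul_sq (by norm_num : (0:ℝ) < 1/2)).abs.const_mul _
  refine h.congr (ae_of_all _ fun x => ?_)
  show (Real.sqrt (2 * π))⁻¹ * |x * rexp (-(1/2 : ℝ) * x ^ 2)| = gaussianPDFReal 0 1 x * |x|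
  rw [gpdf_eq, abs_mul, abs_of_nonneg (Real.exp_nonneg _)]
  rw [show -(1/2 : ℝ) * x ^ 2 = -(x ^ 2 / 2) by ring]
  ring
lemma abs_tanh_lt_one (x : ℝ) : |Real.tanh x| < 1 := by
  have hc := Real.cosh_pos x
  rw [Real.tanh_eq_sinh_div_cosh, abs_div, abs_of_pos hc, div_lt_one hc]
  calc |Real.sinh x| = Real.sinh |x| := Real.abs_sinh x
    _ < Real.cosh |x| := Real.sinh_lt_cosh _
    _ = Real.cosh x := Real.cosh_abs x

lemma abs_tanh_le_one (x : ℝ) : |Real.tanh x| ≤ 1 := (_root_.abs_tanh_lt_one x).le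

lemma tanh_sq_lt_one (x : ℝ) : Real.tanh x ^ 2 < 1 := by
  have := _root_.abs_tanh_lt_one x
  nlinarith [abs_nonneg (Real.tanh x), sq_abs (Real.tanh x)]

lemma continuous_tanh : Continuous Real.tanh := by
  have : Continuous fun x : ℝ => Real.sinh x / Real.cosh x :=
    Real.continuous_sinh.div Real.continuous_cosh fun x => (Real.cosh_pos x).ne'
  simpa [funext fun x => Real.tanh_eq_sinh_div_cosh x] using this

lemma hasDerivAt_tanh (x : ℝ) : HasDerivAt Real.tanh (1 - Real.tanh x ^ 2) x := by
  have hc := Real.cosh_pos x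
  have h : HasDerivAt (fun y => Real.sinh y / Real.cosh y)
      ((Real.cosh x * Real.cosh x - Real.sinh x * Real.sinh x) / Real.cosh x ^ 2) x :=
    (Real.hasDerivAt_sinh x).div (Real.hasDerivAt_cosh x) hc.ne'
  have heq : Real.tanh = fun y => Real.sinh y / Real.cosh y :=
    funext fun y => Real.tanh_eq_sinh_div_cosh y
  rw [heq]
  convert h using 1
  field_simp

lemma hasDerivAt_log_two_cosh (y : ℝ) :
    HasDerivAt (fun y => Real.log (2 * Real.cosh y)) (Real.tanh y) y := by
  have hc := Real.cosh_pos y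
  have h2 : 2 * Real.cosh y ≠ 0 := by positivity
  have h := ((Real.hasDerivAt_cosh y).const_mul 2).log h2
  convert h using 1
  rw [Real.tanh_eq_sinh_div_cosh]
  field_simp

lemma abs_log_two_cosh_le (y : ℝ) : |Real.log (2 * Real.cosh y)| ≤ Real.log 2 + |y| := by
  have h1 : (1:ℝ) ≤ Real.cosh y := Real.one_le_cosh y
  have hle : Real.cosh y ≤ rexp |y| := by
    rw [Real.cosh_eq]
    have h2 : rexp y ≤ rexp |y| := Real.exp_le_exp.2 (le_abs_self y)
    have h3 : rexp (-y) ≤ rexp |y| := Real.exp_le_exp.2 (neg_le_abs y)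
    linarith
  have hlogc : 0 ≤ Real.log (Real.cosh y) := Real.log_nonneg h1
  have hlogc2 : Real.log (Real.cosh y) ≤ |y| := by
    calc Real.log (Real.cosh y) ≤ Real.log (rexp |y|) :=
          Real.log_le_log (by positivity) hle
      _ = |y| := Real.log_exp _
  rw [Real.log_mul two_ne_zero (by positivity),
    abs_of_nonneg (add_nonneg (Real.log_nonneg one_le_two) hlogc)]
  linarith
lemma hasDerivAt_gpdf (z : ℝ) :
    HasDerivAt (fun z => gaussianPDFReal 0 1 z) (-z * gaussianPDFReal 0 1 z) z := by
  have hin : HasDerivAt (fun z : ℝ => -(z ^ 2 / 2)) (-z) z := by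
    have := ((hasDerivAt_pow 2 z).div_const 2).neg
    exact this.congr_deriv (by norm_num)
  have h := (hin.exp).const_mul ((Real.sqrt (2 * π))⁻¹)
  have heq : (fun z : ℝ => gaussianPDFReal 0 1 z)
      = fun z => (Real.sqrt (2 * π))⁻¹ * rexp (-(z ^ 2 / 2)) := funext fun z => gpdf_eq z
  rw [heq, gpdf_eq]
  exact h.congr_deriv (by ring)

lemma continuous_gpdf : Continuous (gaussianPDFReal 0 1) := by
  have : Continuous fun z : ℝ => (Real.sqrt (2 * π))⁻¹ * rexp (-(z ^ 2 / 2)) := by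
    continuity
  simpa [funext fun z => gpdf_eq z] using this

lemma integrable_gpdf_mul_abs : Integrable (fun z => gaussianPDFReal 0 1 z * |z|) :=
  (integrable_stdGaussian_iff (fun z => |z|)).mp integrable_abs_stdGaussian

lemma stein_tanh (b c : ℝ) :
    ∫ z, z * Real.tanh (c + b * z) ∂stdGaussian
      = b * ∫ z, (1 - Real.tanh (c + b * z) ^ 2) ∂stdGaussian := by
  set p : ℝ → ℝ := fun z => gaussianPDFReal 0 1 z with hp
  have hpnn : ∀ z, 0 ≤ p z := fun z => gaussianPDFReal_nonneg 0 1 z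
  set T : ℝ → ℝ := fun z => Real.tanh (c + b * z) with hT
  have hTcont : Continuous T := continuous_tanh.comp (by continuity)
  have hTle : ∀ z, |T z| ≤ 1 := fun z => abs_tanh_le_one _
  -- the function H and its derivative
  set H : ℝ → ℝ := fun z => T z * p z with hH
  set H' : ℝ → ℝ := fun z => (1 - T z ^ 2) * b * p z + T z * (-z * p z) with hH'
  have hHderiv : ∀ z, HasDerivAt H (H' z) z := by
    intro z
    have hinner : HasDerivAt (fun z : ℝ => c + b * z) b z := by
      exact ((hasDerivAt_const z c).add ((hasDerivAt_id z).const_mul b)).congr_deriv (by simp)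
    have hTd : HasDerivAt T ((1 - T z ^ 2) * b) z :=
      by have h := (hasDerivAt_tanh (c + b * z)).comp z hinner; exact h
    exact hTd.mul (hasDerivAt_gpdf z)
  have hHint : Integrable H := by
    refine Integrable.mono' (integrable_gaussianPDFReal 0 1)
      (hTcont.mul continuous_gpdf).aestronglyMeasurable (ae_of_all _ fun z => ?_)
    have := hTle z
    have h0 := hpnn z
    rw [Real.norm_eq_abs, abs_mul, abs_of_nonneg h0]
    nlinarith [abs_nonneg (T z)]
  have hH'int : Integrable H' := by
    have hint : Integrable (fun z => |b| * p z + p z * |z|) :=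
      ((integrable_gaussianPDFReal 0 1).const_mul |b|).add integrable_gpdf_mul_abs
    refine Integrable.mono' hint ?_ (ae_of_all _ fun z => ?_)
    · exact ((((continuous_const.sub (hTcont.pow 2)).mul continuous_const).mul
        continuous_gpdf).add (hTcont.mul ((continuous_id.neg).mul
        continuous_gpdf))).aestronglyMeasurable
    · have h0 := hpnn z
      have h1 := hTle z
      have h2 : |1 - T z ^ 2| ≤ 1 := by
        rw [abs_le]
        constructor <;> nlinarith [sq_abs (T z), abs_nonneg (T z)]
      rw [Real.norm_eq_abs]
      calc |(1 - T z ^ 2) * b * p z + T z * (-z * p z)|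
          ≤ |(1 - T z ^ 2) * b * p z| + |T z * (-z * p z)| := abs_add_le _ _
        _ ≤ |b| * p z + p z * |z| := by
            rw [abs_mul, abs_mul, abs_mul, abs_mul, abs_neg, abs_of_nonneg h0]
            have e1 : |1 - T z ^ 2| * |b| * p z ≤ 1 * |b| * p z := by
              apply mul_le_mul_of_nonneg_right _ h0
              exact mul_le_mul_of_nonneg_right h2 (abs_nonneg b)
            have e2 : |T z| * (|z| * p z) ≤ 1 * (|z| * p z) := by
              apply mul_le_mul_of_nonneg_right h1
              positivity
            calc |1 - T z ^ 2| * |b| * p z + |T z| * (|z| * p z)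
                ≤ 1 * |b| * p z + 1 * (|z| * p z) := add_le_add e1 e2
              _ = |b| * p z + p z * |z| := by ring
  have hzero : ∫ z, H' z = 0 :=
    integral_eq_zero_of_hasDerivAt_of_integrable hHderiv hH'int hHint
  -- integrability on the Gaussian side
  have I1 : Integrable (fun z => 1 - T z ^ 2) stdGaussian := by
    refine integrable_of_bounded (C := 1) ?_ (fun z => ?_)
    · exact (Continuous.aestronglyMeasurable (by continuity))
    · rw [abs_le]
      have := hTle z
      constructor <;> nlinarith [sq_abs (T z), abs_nonneg (T z)]
  have I2 : Integrable (fun z => z * T z) stdGaussian := by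
    refine Integrable.mono' integrable_abs_stdGaussian
      (Continuous.aestronglyMeasurable (by continuity)) (ae_of_all _ fun z => ?_)
    rw [Real.norm_eq_abs, abs_mul]
    have := hTle z
    nlinarith [abs_nonneg z]
  have key : (∫ z, z * T z ∂stdGaussian) - b * ∫ z, (1 - T z ^ 2) ∂stdGaussian = 0 := by
    have h1 : (∫ z, z * T z ∂stdGaussian) - b * ∫ z, (1 - T z ^ 2) ∂stdGaussian
        = ∫ z, (z * T z - b * (1 - T z ^ 2)) ∂stdGaussian := by
      rw [integral_sub I2 (I1.const_mul b), integral_const_mul]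
    rw [h1, integral_stdGaussian]
    have h2 : ∀ z, gaussianPDFReal 0 1 z * (z * T z - b * (1 - T z ^ 2)) = -H' z := by
      intro z
      simp only [hH', hp]
      ring
    calc ∫ z, gaussianPDFReal 0 1 z * (z * T z - b * (1 - T z ^ 2))
        = ∫ z, -H' z := by congr 1; ext z; exact h2 z
      _ = -∫ z, H' z := integral_neg _
      _ = 0 := by rw [hzero]; ring
  linarith [key]
lemma nishimori {t : ℝ} (ht : 0 < t) :
    ∫ z, Real.tanh (t + Real.sqrt t * z) ∂stdGaussian
      = ∫ z, Real.tanh (t + Real.sqrt t * z) ^ 2 ∂stdGaussian := by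
  set b := Real.sqrt t with hbdef
  have hb : b * b = t := Real.mul_self_sqrt ht.le
  set T : ℝ → ℝ := fun z => Real.tanh (t + b * z) with hT
  show (∫ z, T z ∂stdGaussian) = ∫ z, T z ^ 2 ∂stdGaussian
  have hTcont : Continuous T := continuous_tanh.comp (by continuity)
  have I1 : Integrable T stdGaussian :=
    integrable_of_bounded (C := 1) hTcont.aestronglyMeasurable (fun z => abs_tanh_le_one _)
  have I2 : Integrable (fun z => T z ^ 2) stdGaussian := by
    refine integrable_of_bounded (C := 1) (hTcont.pow 2).aestronglyMeasurable (fun z => ?_)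
    have := abs_tanh_le_one (t + b * z)
    rw [abs_pow]
    nlinarith [abs_nonneg (T z)]
  set g : ℝ → ℝ := fun w => rexp (-(w ^ 2 / 2)) * (Real.sinh (b * w) / Real.cosh (b * w) ^ 2)
    with hg
  have hgodd : ∀ w, g (-w) = -g w := by
    intro w
    simp only [hg]
    rw [show ((-w : ℝ)) ^ 2 = w ^ 2 by ring, mul_neg, Real.sinh_neg, Real.cosh_neg]
    ring
  have hgzero : ∫ w, g w = 0 := by
    have h1 : ∫ w, g (-w) = ∫ w, g w := integral_neg_eq_self g volume
    have h2 : ∫ w, g (-w) = -∫ w, g w := by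
      rw [show (fun w => g (-w)) = fun w => -g w from funext hgodd, integral_neg]
    linarith
  have key : ∫ z, (T z - T z ^ 2) ∂stdGaussian = 0 := by
    rw [integral_stdGaussian]
    have hpt : ∀ z, gaussianPDFReal 0 1 z * (T z - T z ^ 2)
        = ((Real.sqrt (2 * π))⁻¹ * rexp (-(t / 2))) * g (z + b) := by
      intro z
      have hu : b * (z + b) = t + b * z := by rw [mul_add, hb]; ring
      have hc := Real.cosh_pos (t + b * z)
      have halg : T z - T z ^ 2
          = Real.sinh (t + b * z) * (Real.cosh (t + b * z) - Real.sinh (t + b * z))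
            / Real.cosh (t + b * z) ^ 2 := by
        simp only [hT, Real.tanh_eq_sinh_div_cosh]
        field_simp
      rw [gpdf_eq, halg, Real.cosh_sub_sinh]
      simp only [hg, hu]
      have hexp : rexp (-(z ^ 2 / 2)) * rexp (-(t + b * z))
          = rexp (-(t / 2)) * rexp (-((z + b) ^ 2 / 2)) := by
        rw [← Real.exp_add, ← Real.exp_add]
        congr 1
        linear_combination ((1:ℝ)/2) * hb
      linear_combination (Real.sqrt (2 * π))⁻¹
        * (Real.sinh (t + b * z) / Real.cosh (t + b * z) ^ 2) * hexp
    calc ∫ z, gaussianPDFReal 0 1 z * (T z - T z ^ 2)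
        = ∫ z, ((Real.sqrt (2 * π))⁻¹ * rexp (-(t / 2))) * g (z + b) := by
          congr 1; ext z; exact hpt z
      _ = ((Real.sqrt (2 * π))⁻¹ * rexp (-(t / 2))) * ∫ z, g (z + b) := integral_const_mul _ _
      _ = ((Real.sqrt (2 * π))⁻¹ * rexp (-(t / 2))) * ∫ w, g w := by
          rw [integral_add_right_eq_self g b]
      _ = 0 := by rw [hgzero]; ring
  have h2 := integral_sub I1 I2
  rw [key] at h2
  linarith [h2]
noncomputable def Alog (t : ℝ) : ℝ :=
  ∫ z, Real.log (2 * Real.cosh (t + Real.sqrt t * z)) ∂stdGaussian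

lemma hasDerivAt_Alog {t : ℝ} (ht : 0 < t) :
    HasDerivAt Alog
      ((1 + ∫ z, Real.tanh (t + Real.sqrt t * z) ^ 2 ∂stdGaussian) / 2) t := by
  have hst : 0 < Real.sqrt t := Real.sqrt_pos.mpr ht
  have hst2 : 0 < Real.sqrt (t / 2) := Real.sqrt_pos.mpr (by linarith)
  set F : ℝ → ℝ → ℝ := fun x z => Real.log (2 * Real.cosh (x + Real.sqrt x * z)) with hF
  set F' : ℝ → ℝ → ℝ :=
    fun x z => Real.tanh (x + Real.sqrt x * z) * (1 + 1 / (2 * Real.sqrt x) * z) with hF'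
  set bound : ℝ → ℝ := fun z => 1 + (2 * Real.sqrt (t / 2))⁻¹ * |z| with hbound
  have hcontF : ∀ x, Continuous (fun z => F x z) := by
    intro x
    apply Continuous.log
    · continuity
    · intro z
      have := Real.cosh_pos (x + Real.sqrt x * z)
      positivity
  have key := hasDerivAt_integral_of_dominated_loc_of_deriv_le (μ := stdGaussian)
    (F := F) (F' := F') (x₀ := t) (s := Metric.ball t (t / 2)) (bound := bound)
    (Metric.ball_mem_nhds t (by linarith))
    (Eventually.of_forall fun x => (hcontF x).aestronglyMeasurable)
    ?hFint ?hF'meas ?hbnd ?hbint ?hdiff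
  case hFint =>
    have hint : Integrable (fun z => (Real.log 2 + |t|) + Real.sqrt t * |z|) stdGaussian :=
      (integrable_const _).add (integrable_abs_stdGaussian.const_mul _)
    refine Integrable.mono' hint (hcontF t).aestronglyMeasurable (ae_of_all _ fun z => ?_)
    rw [Real.norm_eq_abs]
    calc |F t z| ≤ Real.log 2 + |t + Real.sqrt t * z| := abs_log_two_cosh_le _
      _ ≤ Real.log 2 + (|t| + |Real.sqrt t * z|) :=
          add_le_add_right (abs_add_le _ _) _
      _ = Real.log 2 + |t| + Real.sqrt t * |z| := by
          rw [abs_mul, abs_of_nonneg (Real.sqrt_nonneg t)]; ring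
  case hF'meas =>
    apply Continuous.aestronglyMeasurable
    exact (continuous_tanh.comp (by continuity)).mul (by continuity)
  case hbnd =>
    refine ae_of_all _ fun z x hx => ?_
    have hx2 : t / 2 < x := by
      rw [Metric.mem_ball, Real.dist_eq, abs_lt] at hx
      linarith [hx.1]
    have hxpos : 0 < x := by linarith
    have hsx : Real.sqrt (t / 2) ≤ Real.sqrt x := Real.sqrt_le_sqrt hx2.le
    have hsxpos : 0 < Real.sqrt x := Real.sqrt_pos.mpr hxpos
    rw [Real.norm_eq_abs, abs_mul]
    have h1 : |Real.tanh (x + Real.sqrt x * z)| ≤ 1 := abs_tanh_le_one _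
    have h2 : |1 + 1 / (2 * Real.sqrt x) * z| ≤ bound z := by
      calc |1 + 1 / (2 * Real.sqrt x) * z| ≤ 1 + |1 / (2 * Real.sqrt x) * z| := by
            calc |1 + 1 / (2 * Real.sqrt x) * z|
                ≤ |(1:ℝ)| + |1 / (2 * Real.sqrt x) * z| := abs_add_le _ _
              _ = 1 + |1 / (2 * Real.sqrt x) * z| := by rw [abs_one]
        _ ≤ bound z := by
            rw [hbound, abs_mul]
            have e1 : |1 / (2 * Real.sqrt x)| = (2 * Real.sqrt x)⁻¹ := by
              rw [abs_of_nonneg (by positivity)]; ring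
            rw [e1]
            have e2 : (2 * Real.sqrt x)⁻¹ ≤ (2 * Real.sqrt (t / 2))⁻¹ := by
              apply inv_anti₀ (by positivity)
              linarith
            have := mul_le_mul_of_nonneg_right e2 (abs_nonneg z)
            linarith
    calc |Real.tanh (x + Real.sqrt x * z)| * |1 + 1 / (2 * Real.sqrt x) * z|
        ≤ 1 * bound z := mul_le_mul h1 h2 (abs_nonneg _) zero_le_one
      _ = bound z := one_mul _
  case hbint =>
    exact (integrable_const _).add (integrable_abs_stdGaussian.const_mul _)
  case hdiff =>
    refine ae_of_all _ fun z x hx => ?_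
    have hx2 : t / 2 < x := by
      rw [Metric.mem_ball, Real.dist_eq, abs_lt] at hx
      linarith [hx.1]
    have hxpos : 0 < x := by linarith
    have hinner : HasDerivAt (fun x => x + Real.sqrt x * z)
        (1 + 1 / (2 * Real.sqrt x) * z) x :=
      (hasDerivAt_id x).add ((Real.hasDerivAt_sqrt hxpos.ne').mul_const z)
    exact (hasDerivAt_log_two_cosh (x + Real.sqrt x * z)).comp x hinner
  -- now compute the value of the derivative
  have hAeq : (fun x => ∫ z, F x z ∂stdGaussian) = Alog := by
    funext x; rfl
  have hval : ∫ z, F' t z ∂stdGaussian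
      = (1 + ∫ z, Real.tanh (t + Real.sqrt t * z) ^ 2 ∂stdGaussian) / 2 := by
    have Itanh : Integrable (fun z => Real.tanh (t + Real.sqrt t * z)) stdGaussian :=
      integrable_of_bounded (C := 1)
        ((continuous_tanh.comp (by continuity)).aestronglyMeasurable)
        (fun z => abs_tanh_le_one _)
    have Iztanh : Integrable (fun z => z * Real.tanh (t + Real.sqrt t * z)) stdGaussian := by
      refine Integrable.mono' integrable_abs_stdGaussian
        (Continuous.aestronglyMeasurable
          (continuous_id.mul (continuous_tanh.comp (by continuity))))
        (ae_of_all _ fun z => ?_)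
      rw [Real.norm_eq_abs, abs_mul]
      have := abs_tanh_le_one (t + Real.sqrt t * z)
      nlinarith [abs_nonneg z]
    have hsplit : ∫ z, F' t z ∂stdGaussian
        = (∫ z, Real.tanh (t + Real.sqrt t * z) ∂stdGaussian)
          + (2 * Real.sqrt t)⁻¹ * ∫ z, z * Real.tanh (t + Real.sqrt t * z) ∂stdGaussian := by
      rw [← integral_const_mul, ← integral_add Itanh (Iztanh.const_mul _)]
      congr 1; ext z
      simp only [hF']
      ring
    rw [hsplit, stein_tanh (Real.sqrt t) t]
    have hone : ∫ (_ : ℝ), (1:ℝ) ∂stdGaussian = 1 := by simp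
    have hsub : ∫ z, (1 - Real.tanh (t + Real.sqrt t * z) ^ 2) ∂stdGaussian
        = 1 - ∫ z, Real.tanh (t + Real.sqrt t * z) ^ 2 ∂stdGaussian := by
      rw [integral_sub (integrable_const 1) ?hI2, hone]
      case hI2 =>
        refine integrable_of_bounded (C := 1)
          (Continuous.aestronglyMeasurable
            ((continuous_tanh.comp (by continuity)).pow 2)) (fun z => ?_)
        rw [abs_pow]
        have := abs_tanh_le_one (t + Real.sqrt t * z)
        nlinarith [abs_nonneg (Real.tanh (t + Real.sqrt t * z))]
    rw [nishimori ht, hsub]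
    set Q := ∫ z, Real.tanh (t + Real.sqrt t * z) ^ 2 ∂stdGaussian
    field_simp
    ring
  rw [hAeq, hval] at key
  exact key.2
/-- Envelope theorem: if `q*(σ²)` solves Tanaka's stationarity condition and is
differentiable in `σ²`, then
`d/dσ² h_RS(q*(σ²);σ²,α) = (1/(2σ²))·(1 − q*)/(σ² + α(1 − q*))`. -/
theorem hRS_envelope_deriv (α : ℝ) (hα : 0 < α) (qstar : ℝ → ℝ)
    (hfix : ∀ s : ℝ, 0 < s →
      qstar s = ∫ z, Real.tanh (lamOf s α (qstar s)
        + Real.sqrt (lamOf s α (qstar s)) * z) ^ 2 ∂stdGaussian)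
    (s : ℝ) (hs : 0 < s) (hdiff : DifferentiableAt ℝ qstar s) :
    deriv (fun s' => hRS s' α (qstar s')) s =
      1 / (2 * s) * ((1 - qstar s) / (s + α * (1 - qstar s))) := by
  have hfixs := hfix s hs
  -- `qstar s < 1`
  have hq1 : qstar s < 1 := by
    set t := lamOf s α (qstar s) with htdef
    have I2 : Integrable (fun z => Real.tanh (t + Real.sqrt t * z) ^ 2) stdGaussian := by
      refine integrable_of_bounded (C := 1)
        (Continuous.aestronglyMeasurable
          ((continuous_tanh.comp (continuous_const.add (continuous_const.mul continuous_id))).pow 2)) (fun z => ?_)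
      rw [abs_pow]
      have := abs_tanh_le_one (t + Real.sqrt t * z)
      nlinarith [abs_nonneg (Real.tanh (t + Real.sqrt t * z))]
    have Isub : Integrable (fun z => 1 - Real.tanh (t + Real.sqrt t * z) ^ 2) stdGaussian :=
      (integrable_const 1).sub I2
    have hpos : 0 < ∫ z, (1 - Real.tanh (t + Real.sqrt t * z) ^ 2) ∂stdGaussian := by
      rw [integral_pos_iff_support_of_nonneg_ae
        (ae_of_all _ fun z => by
          have := _root_.tanh_sq_lt_one (t + Real.sqrt t * z)
          simp only [Pi.zero_apply]
          linarith) Isub]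
      have hsupp : Function.support
          (fun z => 1 - Real.tanh (t + Real.sqrt t * z) ^ 2) = Set.univ :=
        Set.eq_univ_of_forall fun z => by
          have := _root_.tanh_sq_lt_one (t + Real.sqrt t * z)
          simp only [Function.mem_support]
          intro h
          linarith [h]
      rw [hsupp, measure_univ]
      exact zero_lt_one
    have heq : ∫ z, (1 - Real.tanh (t + Real.sqrt t * z) ^ 2) ∂stdGaussian
        = 1 - ∫ z, Real.tanh (t + Real.sqrt t * z) ^ 2 ∂stdGaussian := by
      rw [integral_sub (integrable_const 1) I2]
      simp
    rw [heq, ← hfixs] at hpos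
    linarith
  have h1q : 0 < 1 - qstar s := by linarith
  have hD : 0 < s + α * (1 - qstar s) := by
    have := mul_pos hα h1q
    linarith
  have ht0 : 0 < lamOf s α (qstar s) := by
    rw [lamOf]
    exact inv_pos.mpr hD
  have hq' := hdiff.hasDerivAt
  set q' := deriv qstar s with hq'def
  -- derivative of the map `s' ↦ s' + α (1 - qstar s')`
  have hDd : HasDerivAt (fun s' => s' + α * (1 - qstar s')) (1 + α * (0 - q')) s :=
    (hasDerivAt_id s).add (((hasDerivAt_const s (1:ℝ)).sub hq').const_mul α)
  have hL : HasDerivAt (fun s' => (s' + α * (1 - qstar s'))⁻¹)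
      (-(1 + α * (0 - q')) / (s + α * (1 - qstar s)) ^ 2) s :=
    hDd.inv hD.ne'
  -- derivative of the Alog part
  have hAt : HasDerivAt Alog ((1 + qstar s) / 2) (lamOf s α (qstar s)) := by
    have h := hasDerivAt_Alog ht0
    rw [← hfixs] at h
    exact h
  have hcomp : HasDerivAt (fun s' => Alog ((s' + α * (1 - qstar s'))⁻¹))
      ((1 + qstar s) / 2 * (-(1 + α * (0 - q')) / (s + α * (1 - qstar s)) ^ 2)) s :=
    by have h := (show HasDerivAt Alog ((1 + qstar s) / 2) ((s + α * (1 - qstar s))⁻¹) from hAt).comp s hL; exact h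
  -- derivative of the middle term
  have hterm2 : HasDerivAt
      (fun s' => 1 / 2 * (s' + α * (1 - qstar s'))⁻¹ * (1 + qstar s'))
      ((1 / 2 * (-(1 + α * (0 - q')) / (s + α * (1 - qstar s)) ^ 2)) * (1 + qstar s)
        + (1 / 2 * (s + α * (1 - qstar s))⁻¹) * (0 + q')) s :=
    (hL.const_mul (1/2 : ℝ)).mul ((hasDerivAt_const s (1:ℝ)).add hq')
  -- derivative of the log term
  have hac : HasDerivAt (fun s' => α / s') ((0 * s - α * 1) / s ^ 2) s :=
    (hasDerivAt_const s α).div (hasDerivAt_id s) hs.ne'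
  have hmul : HasDerivAt (fun s' => α / s' * (1 - qstar s'))
      (((0 * s - α * 1) / s ^ 2) * (1 - qstar s) + (α / s) * (0 - q')) s :=
    hac.mul ((hasDerivAt_const s (1:ℝ)).sub hq')
  have hgd : HasDerivAt (fun s' => 1 + α / s' * (1 - qstar s'))
      (0 + (((0 * s - α * 1) / s ^ 2) * (1 - qstar s) + (α / s) * (0 - q'))) s :=
    (hasDerivAt_const s (1:ℝ)).add hmul
  have hgpos : 0 < 1 + α / s * (1 - qstar s) := by
    have := mul_pos (div_pos hα hs) h1q
    linarith
  have hlog : HasDerivAt (fun s' => Real.log (1 + α / s' * (1 - qstar s')))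
      ((0 + (((0 * s - α * 1) / s ^ 2) * (1 - qstar s) + (α / s) * (0 - q')))
        / (1 + α / s * (1 - qstar s))) s :=
    hgd.log hgpos.ne'
  have hterm3 : HasDerivAt
      (fun s' => 1 / (2 * α) * Real.log (1 + α / s' * (1 - qstar s')))
      (1 / (2 * α) * ((0 + (((0 * s - α * 1) / s ^ 2) * (1 - qstar s) + (α / s) * (0 - q')))
        / (1 + α / s * (1 - qstar s)))) s :=
    hlog.const_mul _
  have htotal : HasDerivAt (fun s' => hRS s' α (qstar s'))
      ((1 + qstar s) / 2 * (-(1 + α * (0 - q')) / (s + α * (1 - qstar s)) ^ 2)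
        - ((1 / 2 * (-(1 + α * (0 - q')) / (s + α * (1 - qstar s)) ^ 2)) * (1 + qstar s)
            + (1 / 2 * (s + α * (1 - qstar s))⁻¹) * (0 + q'))
        - 1 / (2 * α) * ((0 + (((0 * s - α * 1) / s ^ 2) * (1 - qstar s) + (α / s) * (0 - q')))
            / (1 + α / s * (1 - qstar s)))) s := by
    have h := (hcomp.sub hterm2).sub hterm3
    exact h.congr_of_eventuallyEq (Eventually.of_forall fun y => rfl)
  rw [htotal.deriv]
  have hgne : (1 : ℝ) + α / s * (1 - qstar s) ≠ 0 := hgpos.ne'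
  field_simp
  ring
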